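/- The complex algebra Cm F of the blown-up-and-blurred atom structure is not representable: there is no equivalence relation E on any set and no isomorphism from Cm F onto a subalgebra of the full set relation algebra ℘(E). -/

import Mathlib

/-- A relation-type algebra: a Boolean algebra with composition, converse and identity. -/
structure RelAlgOps (A : Type*) [BooleanAlgebra A] where
  comp : A → A → A
  conv : A → A
  one' : A

/-- `h` is a representation of the relation-type algebra `R` over the equivalence
relation `E`: an isomorphism onto a subalgebra of the full set relation algebra `℘(E)`. -/
def IsRelRepresentation {A : Type*} [BooleanAlgebra A] (R : RelAlgOps A)
    {X : Type*} (E : X → X → Prop) (h : A → Set (X × X)) : Prop :=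
  Function.Injective h ∧
  (∀ a, h a ⊆ {p : X × X | E p.1 p.2}) ∧
  h ⊤ = {p : X × X | E p.1 p.2} ∧
  h ⊥ = ∅ ∧
  (∀ a b, h (a ⊔ b) = h a ∪ h b) ∧
  (∀ a, h aᶜ = {p : X × X | E p.1 p.2} \ h a) ∧
  (∀ a b, h (R.comp a b) =
    {p : X × X | E p.1 p.2 ∧ ∃ y, (p.1, y) ∈ h a ∧ (y, p.2) ∈ h b}) ∧
  (∀ a, h (R.conv a) = {p : X × X | (p.2, p.1) ∈ h a}) ∧
  h R.one' = {p : X × X | E p.1 p.2 ∧ p.1 = p.2}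

/-- A relation-type algebra is representable if it embeds in some `℘(E)`. -/
def IsRepresentable {A : Type*} [BooleanAlgebra A] (R : RelAlgOps A) : Prop :=
  ∃ (X : Type) (E : X → X → Prop), Equivalence E ∧
    ∃ h : A → Set (X × X), IsRelRepresentation R E h

/-- `i, j, k` are evenly distributed: some arrangement `p, q, r` of them
satisfies `r - q = q - p` (over the integers, i.e. `p + r = 2 * q`). -/
def evenly (i j k : ℕ) : Prop :=
  ∃ p q r : ℕ, ({p, q, r} : Set ℕ) = {i, j, k} ∧ p + r = 2 * q

section Atoms
variable (I : Type) [Fintype I] [DecidableEq I]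

/-- The two-element subsets of `I` (the blurs). -/
def TwoSet := {W : Finset I // W.card = 2}

/-- `H = {(i, P, W) : P ∈ W}`. -/
def Hset := {x : ℕ × I × TwoSet I // x.2.1 ∈ x.2.2.val}

/-- The atoms: `H` together with the identity atom. -/
def Atoms := Hset I ⊕ Unit

/-- The consistency (forbidden triple) relation on the atoms. -/
def ConTriple : Atoms I → Atoms I → Atoms I → Prop
  | Sum.inr _, b, c => b = c
  | a, Sum.inr _, c => a = c
  | a, b, Sum.inr _ => a = b
  | Sum.inl a, Sum.inl b, Sum.inl c =>
      (a.val.2.2.val ∩ b.val.2.2.val ∩ c.val.2.2.val = ∅) ∨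
      (evenly a.val.1 b.val.1 c.val.1 ∧
        ¬ (a.val.2.1 = b.val.2.1 ∧ b.val.2.1 = c.val.2.1))

/-- Composition in the complex algebra `Cm F`. -/
def cmComp (X Y : Set (Atoms I)) : Set (Atoms I) :=
  {c | ∃ a ∈ X, ∃ b ∈ Y, ConTriple I a b c}

/-- The complex algebra `Cm F` of the blown-up-and-blurred atom structure. -/
def cmAlg : RelAlgOps (Set (Atoms I)) where
  comp := cmComp I
  conv := id
  one' := {Sum.inr ()}

end Atoms

-- AUX
private lemma pigeon_inf {I : Type} [Fintype I] [Nonempty I] {S : Set ℕ} (hS : S.Infinite)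
    (f : ℕ → I) : ∃ c, {n | n ∈ S ∧ f n = c}.Infinite := by
  by_contra hcon
  push_neg at hcon
  have hsub : S ⊆ ⋃ c : I, {n | n ∈ S ∧ f n = c} := fun n hn => Set.mem_iUnion.2 ⟨f n, hn, rfl⟩
  exact hS ((Set.finite_iUnion hcon).subset hsub)

private lemma mono_triangle {I : Type} [Fintype I] [Nonempty I] (f : ℕ → ℕ → I) :
    ∃ i j k, i < j ∧ j < k ∧ f i j = f i k ∧ f i j = f j k := by
  have key : ∀ S : Set ℕ, S.Infinite → ∃ (c : I) (T : Set ℕ),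
      T.Infinite ∧ T ⊆ S ∧ ∀ m ∈ T, sInf S < m ∧ f (sInf S) m = c := by
    intro S hS
    have h1 : {n | n ∈ S ∧ sInf S < n}.Infinite := by
      have hsub : S \ {n | n ≤ sInf S} ⊆ {n | n ∈ S ∧ sInf S < n} :=
        fun n hn => ⟨hn.1, lt_of_not_ge hn.2⟩
      exact (hS.diff (Set.finite_le_nat _)).mono hsub
    obtain ⟨c, hc⟩ := pigeon_inf h1 (f (sInf S))
    exact ⟨c, _, hc, fun n hn => hn.1.1, fun m hm => ⟨hm.1.2, hm.2⟩⟩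
  choose cF TF hT using key
  let St : ℕ → {S : Set ℕ // S.Infinite} := fun n =>
    Nat.rec (motive := fun _ => {S : Set ℕ // S.Infinite})
      ⟨Set.univ, Set.infinite_univ⟩ (fun _ p => ⟨TF p.1 p.2, (hT p.1 p.2).1⟩) n
  let x : ℕ → ℕ := fun n => sInf (St n).1
  let c : ℕ → I := fun n => cF (St n).1 (St n).2
  have hsubn : ∀ n, (St (n+1)).1 ⊆ (St n).1 := fun n => (hT (St n).1 (St n).2).2.1
  have hchain : ∀ a b : ℕ, a ≤ b → (St b).1 ⊆ (St a).1 := by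
    intro a b hab
    induction hab with
    | refl => exact subset_rfl
    | step h ih => exact (hsubn _).trans ih
  have hmem : ∀ n, x n ∈ (St n).1 := fun n => Nat.sInf_mem (St n).2.nonempty
  have hprop : ∀ n m, m ∈ (St (n+1)).1 → x n < m ∧ f (x n) m = c n :=
    fun n m hm => (hT (St n).1 (St n).2).2.2 m hm
  obtain ⟨a, b, hne, heq⟩ := Finite.exists_ne_map_eq_of_infinite c
  have main : ∀ a b : ℕ, a < b → c a = c b →
      ∃ i j k, i < j ∧ j < k ∧ f i j = f i k ∧ f i j = f j k := by
    intro a b hab hcab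
    have hb1 : x b ∈ (St (a+1)).1 := hchain (a+1) b hab (hmem b)
    have hb2 : x (b+1) ∈ (St (a+1)).1 := hchain (a+1) (b+1) (by omega) (hmem (b+1))
    have h1 := hprop a (x b) hb1
    have h2 := hprop a (x (b+1)) hb2
    have h3 := hprop b (x (b+1)) (hmem (b+1))
    exact ⟨x a, x b, x (b+1), h1.1, h3.1, h1.2.trans h2.2.symm,
      h1.2.trans (hcab.trans h3.2.symm)⟩
  rcases lt_trichotomy a b with h | h | h
  · exact main a b h heq
  · exact absurd h hne
  · exact main b a h heq.symm

/-- The set of `H`-atoms with color `P`. -/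
private def cPset (I : Type) [Fintype I] [DecidableEq I] (P : I) : Set (Atoms I) :=
  {c | ∃ s : Hset I, c = Sum.inl s ∧ s.val.2.1 = P}

private lemma conTriple_inl_iff (I : Type) [Fintype I] [DecidableEq I] (a b c : Hset I) :
    ConTriple I (Sum.inl a) (Sum.inl b) (Sum.inl c) ↔
      ((a.val.2.2.val ∩ b.val.2.2.val ∩ c.val.2.2.val = ∅) ∨
      (evenly a.val.1 b.val.1 c.val.1 ∧
        ¬ (a.val.2.1 = b.val.2.1 ∧ b.val.2.1 = c.val.2.1))) := Iff.rfl

private lemma conTriple_id (I : Type) [Fintype I] [DecidableEq I] (a : Hset I) :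
    ConTriple I (Sum.inl a) (Sum.inl a) (Sum.inr ()) := rfl


/-- the complex algebra `Cm F` of the blown-up-and-blurred atom structure
is not representable. -/
theorem cmAlg_not_representable (I : Type) [Fintype I] [DecidableEq I]
    (hI : 6 ≤ Fintype.card I) :
    ¬ IsRepresentable (cmAlg I) := by
  haveI : Nonempty I := Fintype.card_pos_iff.mp (by omega)
  rintro ⟨X, E, hE, h, hinj, hsub, htop, hbot, hsup, hcompl, hcomp, _hconv, hone⟩
  -- basic consequences
  have hmono : ∀ {A B : Set (Atoms I)}, A ⊆ B → h A ⊆ h B := by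
    intro A B hAB
    have hB : h B = h A ∪ h B := by rw [← hsup, sup_eq_right.mpr hAB]
    rw [hB]; exact Set.subset_union_left
  have hdisj : ∀ A B : Set (Atoms I), A ∩ B = ∅ → ∀ p, p ∈ h A → p ∉ h B := by
    intro A B hAB p hpA hpB
    have hBsub : B ⊆ Aᶜ := by
      intro z hz hzA
      have : z ∈ A ∩ B := ⟨hzA, hz⟩
      rw [hAB] at this; exact this
    have hp := hmono hBsub hpB
    rw [hcompl] at hp
    exact hp.2 hpA
  -- two distinct elements of I
  obtain ⟨a0, b0, hab⟩ := Fintype.exists_pair_of_one_lt_card (by omega : 1 < Fintype.card I)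
  have hW0 : ({a0, b0} : Finset I).card = 2 := Finset.card_pair hab
  let W0 : TwoSet I := ⟨{a0, b0}, hW0⟩
  have hmemW0 : a0 ∈ W0.val := Finset.mem_insert_self a0 {b0}
  let t : ℕ → Atoms I := fun i => Sum.inl (⟨(i, a0, W0), hmemW0⟩ : Hset I)
  have tinj : Function.Injective t := by
    intro i j hij
    have h2 := congrArg (fun a : Atoms I => Sum.elim (fun s : Hset I => s.val.1) (fun _ => 0) a) hij
    exact h2
  -- base point
  have htopne : (h (⊤ : Set (Atoms I))).Nonempty := by
    rcases Set.eq_empty_or_nonempty (h ⊤) with he | hn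
    · exfalso
      have : (⊤ : Set (Atoms I)) = ⊥ := hinj (he.trans hbot.symm)
      have : (Sum.inr () : Atoms I) ∈ (⊥ : Set (Atoms I)) := this ▸ Set.mem_univ _
      exact this
    · exact hn
  obtain ⟨p0, hp0⟩ := htopne
  set x : X := p0.1 with hxdef
  have hxx : (x, x) ∈ h ((cmAlg I).one') := by
    rw [hone]; exact ⟨hE.refl x, rfl⟩
  -- the points y i
  have hyex : ∀ i : ℕ, ∃ yy : X, (x, yy) ∈ h {t i} := by
    intro i
    have hsubc : ((cmAlg I).one' : Set (Atoms I)) ⊆ cmComp I {t i} {t i} := by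
      intro cc hcc
      have : cc = Sum.inr () := hcc
      subst this
      exact ⟨t i, rfl, t i, rfl, conTriple_id I _⟩
    have h1 : (x, x) ∈ h ((cmAlg I).comp {t i} {t i}) := hmono hsubc hxx
    rw [hcomp] at h1
    obtain ⟨_, yy, hxy, _⟩ := h1
    exact ⟨yy, hxy⟩
  choose y hy using hyex
  have hyE : ∀ i, E x (y i) := fun i => hsub {t i} (hy i)
  have hyEij : ∀ i j, E (y i) (y j) := fun i j => hE.trans (hE.symm (hyE i)) (hyE j)
  have hyne : ∀ i j : ℕ, i ≠ j → y i ≠ y j := by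
    intro i j hij he
    have hdd : ({t i} : Set (Atoms I)) ∩ {t j} = ∅ := by
      apply Set.singleton_inter_eq_empty.mpr
      simp only [Set.mem_singleton_iff]
      exact fun hc => hij (tinj hc)
    exact hdisj {t i} {t j} hdd (x, y i) (hy i) (he ▸ hy j)
  -- cover of top
  have hsupF : ∀ s : Finset I, h (s.sup (cPset I)) = ⋃ P ∈ s, h (cPset I P) := by
    intro s
    classical
    induction s using Finset.induction_on with
    | empty => rw [Finset.sup_empty, hbot]; simp
    | insert _ _ hni ih =>
        rw [Finset.sup_insert, hsup, ih]
        exact (Finset.set_biUnion_insert _ _ (fun P => h (cPset I P))).symm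
  have hTopEq : (⊤ : Set (Atoms I)) =
      ((cmAlg I).one' : Set (Atoms I)) ⊔ Finset.univ.sup (cPset I) := by
    ext cc
    simp only [Set.top_eq_univ, Set.mem_univ, true_iff, Set.sup_eq_union, Set.mem_union]
    cases cc with
    | inl s =>
        exact Or.inr (Finset.le_sup (f := cPset I) (Finset.mem_univ s.val.2.1) ⟨s, rfl, rfl⟩)
    | inr u => exact Or.inl (by cases u; rfl)
  have hcol : ∀ i j : ℕ, i ≠ j → ∃ P : I, (y i, y j) ∈ h (cPset I P) := by
    intro i j hij
    have hT : (y i, y j) ∈ h ⊤ := by rw [htop]; exact hyEij i j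
    rw [hTopEq, hsup, hsupF] at hT
    rcases hT with h1 | h2
    · exfalso
      rw [hone] at h1
      exact hyne i j hij h1.2
    · obtain ⟨P, _, hP⟩ := Set.mem_iUnion₂.1 h2
      exact ⟨P, hP⟩
  choose col hcolmem using hcol
  let f : ℕ → ℕ → I := fun i j =>
    if hij : i = j then Classical.arbitrary I else col i j hij
  obtain ⟨i, j, k, hij, hjk, e1, e2⟩ := mono_triangle f
  have hfij : ∀ (i j : ℕ) (hij : i ≠ j), f i j = col i j hij := by
    intro i j hij
    simp only [f, dif_neg hij]
  have hik : i ≠ k := ne_of_lt (hij.trans hjk)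
  have h1 : (y i, y j) ∈ h (cPset I (f i j)) := by
    rw [hfij i j (ne_of_lt hij)]; exact hcolmem i j _
  have h2 : (y j, y k) ∈ h (cPset I (f i j)) := by
    rw [e2, hfij j k (ne_of_lt hjk)]; exact hcolmem j k _
  have h3 : (y i, y k) ∈ h (cPset I (f i j)) := by
    rw [e1, hfij i k hik]; exact hcolmem i k _
  have hcc : (y i, y k) ∈ h ((cmAlg I).comp (cPset I (f i j)) (cPset I (f i j))) := by
    rw [hcomp]
    exact ⟨hyEij i k, y j, h1, h2⟩
  -- disjointness: no monochromatic triangle with the same middle blur element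
  have hdd : ∀ P : I, cPset I P ∩ cmComp I (cPset I P) (cPset I P) = ∅ := by
    intro P
    ext cc
    simp only [Set.mem_inter_iff, Set.mem_empty_iff_false, iff_false, not_and]
    rintro ⟨s, rfl, hs⟩ ⟨aa, ⟨sa, rfl, hsa⟩, bb, ⟨sb, rfl, hsb⟩, hcon⟩
    rw [conTriple_inl_iff] at hcon
    rcases hcon with hL | hR
    · have hPa : P ∈ sa.val.2.2.val := hsa ▸ sa.prop
      have hPb : P ∈ sb.val.2.2.val := hsb ▸ sb.prop
      have hPc : P ∈ s.val.2.2.val := hs ▸ s.prop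
      have : P ∈ sa.val.2.2.val ∩ sb.val.2.2.val ∩ s.val.2.2.val :=
        Finset.mem_inter.mpr ⟨Finset.mem_inter.mpr ⟨hPa, hPb⟩, hPc⟩
      rw [hL] at this
      exact Finset.notMem_empty P this
    · exact hR.2 ⟨hsa.trans hsb.symm, hsb.trans hs.symm⟩
  exact hdisj _ _ (hdd (f i j)) (y i, y k) h3 hcc
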